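/- A Hamiltonian action is internally strongly Hamiltonian (Lemma: 'If an action of A on (J : S → M, ω̃) is Hamiltonian, then it is internally strongly Hamiltonian', i.e. the momentum map is equivariant: ⟨μ̃, [X,Y]⟩ = α(X)⟨μ̃, J*Y⟩ for Y a section of ker(ρ)): Let V ⊆ Der(A) and Ω be as in the context, let k ⊆ g be a subset with α(Y) ∈ V for every Y ∈ k (modelling the sections of the kernel of the anchor, whose action vector fields are tangent to the fibers of J), and let μ : g → A be an ℝ-linear map satisfying the quantization condition and also the prequantization condition for ω, where ω(X,Y) := Ω(α(X), α(Y)). Then μ([X,Y]) = α(X)(μ(Y)) for all X ∈ g and Y ∈ k. -/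
import Mathlib


/-- **A Hamiltonian action is internally strongly Hamiltonian.**
If `μ : g → A` satisfies the quantization condition and the prequantization
condition for `ω(X,Y) = Ω(α X, α Y)`, and `k ⊆ g` models the sections of the
kernel of the anchor (so `α Y ∈ V` for `Y ∈ k`), then
`μ([X,Y]) = α(X)(μ(Y))` for all `X ∈ g` and `Y ∈ k`, i.e. the momentum map is
equivariant. -/
theorem hamiltonian_implies_internally_strongly_hamiltonian
    {A : Type*} [CommRing A] [Algebra ℂ A]
    {g : Type*} [LieRing g] [LieAlgebra ℝ g]
    (α : g →ₗ[ℝ] Derivation ℂ A A)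
    (hα : ∀ (X Y : g) (a : A), α ⁅X, Y⁆ a = α X (α Y a) - α Y (α X a))
    (V : Set (Derivation ℂ A A))
    (hVadd : ∀ v ∈ V, ∀ w ∈ V, v + w ∈ V)
    (hVsmul : ∀ (r : ℝ), ∀ v ∈ V, r • v ∈ V)
    (hVlie : ∀ v ∈ V, ∀ w ∈ V, ⁅v, w⁆ ∈ V)
    (hαV : ∀ X : g, α X ∈ V)
    (Ω : Derivation ℂ A A → Derivation ℂ A A → A)
    (hΩalt : ∀ v ∈ V, Ω v v = 0)
    (hΩanti : ∀ v ∈ V, ∀ w ∈ V, Ω v w = - Ω w v)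
    (k : Set g)
    (hk : ∀ Y ∈ k, α Y ∈ V)
    (μ : g →ₗ[ℝ] A)
    (hquant : ∀ (X : g), ∀ v ∈ V, v (μ X) = - Ω (α X) v)
    (hpreq : ∀ X Y : g, μ ⁅X, Y⁆ - α X (μ Y) + α Y (μ X) = - Ω (α X) (α Y)) :
    ∀ (X : g), ∀ Y ∈ k, μ ⁅X, Y⁆ = α X (μ Y) := by
  intro X Y hY
  have h1 : (α Y) (μ X) = - Ω (α X) (α Y) := hquant X (α Y) (hk Y hY)
  have h2 := hpreq X Y
  rw [← h1] at h2
  linear_combination h2
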